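/- The function g(x) = (e^x − 1)^2 / (e^x (e^x − 1 − x)) defined for x > 0 satisfies g(x) → 2 as x → 0+, g(x) → 1 as x → ∞, and 1 < g(x) ≤ 2 for all x > 0. -/

import Mathlib

open Real Filter Set

lemma aux_pos : ∀ x : ℝ, 0 < x → 0 < Real.exp x - 1 - x := fun x hx => by
  have := Real.add_one_lt_exp (ne_of_gt hx)
  linarith

lemma aux_lt : ∀ x : ℝ, 0 < x → 0 < (x - 1) * Real.exp x + 1 := by
  have hmono : StrictMonoOn (fun x : ℝ => (x - 1) * Real.exp x + 1) (Set.Ici 0) := by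
    apply strictMonoOn_of_deriv_pos (convex_Ici 0)
    · fun_prop
    · intro x hx
      rw [interior_Ici] at hx
      have hd : HasDerivAt (fun x : ℝ => (x - 1) * Real.exp x + 1) (x * Real.exp x) x := by
        have h1 : HasDerivAt (fun x : ℝ => (x - 1) * Real.exp x + 1)
            (1 * Real.exp x + (x - 1) * Real.exp x) x :=
          (((hasDerivAt_id x).sub_const 1).mul (Real.hasDerivAt_exp x)).add_const 1
        convert h1 using 1; ring
      rw [hd.deriv]
      exact mul_pos hx (Real.exp_pos x)
  intro x hx
  have := hmono Set.self_mem_Ici (Set.mem_Ici.2 hx.le) hx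
  simpa using this

lemma aux_le : ∀ x : ℝ, 0 ≤ x → 0 ≤ (Real.exp x) ^ 2 - 2 * x * Real.exp x - 1 := by
  have hmono : MonotoneOn (fun x : ℝ => (Real.exp x) ^ 2 - 2 * x * Real.exp x - 1) (Set.Ici 0) := by
    have hd : ∀ x : ℝ, HasDerivAt (fun x : ℝ => (Real.exp x) ^ 2 - 2 * x * Real.exp x - 1)
        (2 * Real.exp x * (Real.exp x - 1 - x)) x := by
      intro x
      have h1 : HasDerivAt (fun x : ℝ => (Real.exp x) ^ 2 - 2 * x * Real.exp x - 1)
          ((2 * Real.exp x ^ 1 * Real.exp x) - ((2 * 1) * Real.exp x + (2 * x) * Real.exp x)) x :=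
        (((Real.hasDerivAt_exp x).pow 2).sub
          ((((hasDerivAt_id x).const_mul 2).mul (Real.hasDerivAt_exp x)))).sub_const 1
      convert h1 using 1; ring
    apply monotoneOn_of_deriv_nonneg (convex_Ici 0)
    · fun_prop
    · intro x _
      exact (hd x).differentiableAt.differentiableWithinAt
    · intro x hx
      rw [interior_Ici] at hx
      rw [(hd x).deriv]
      have := aux_pos x hx
      positivity
  intro x hx
  have := hmono Set.self_mem_Ici (Set.mem_Ici.2 hx) hx
  simpa using this

theorem g_properties :
    Filter.Tendsto (fun x : ℝ => (Real.exp x - 1) ^ 2 / (Real.exp x * (Real.exp x - 1 - x)))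
      (nhdsWithin 0 (Set.Ioi 0)) (nhds 2) ∧
    Filter.Tendsto (fun x : ℝ => (Real.exp x - 1) ^ 2 / (Real.exp x * (Real.exp x - 1 - x)))
      Filter.atTop (nhds 1) ∧
    ∀ x : ℝ, 0 < x →
      1 < (Real.exp x - 1) ^ 2 / (Real.exp x * (Real.exp x - 1 - x)) ∧
      (Real.exp x - 1) ^ 2 / (Real.exp x * (Real.exp x - 1 - x)) ≤ 2 := by
  refine ⟨?_, ?_, ?_⟩
  · -- limit at 0+
    have hA : Tendsto (fun x : ℝ => (Real.exp x - 1) / x) (nhdsWithin 0 (Set.Ioi 0)) (nhds 1) := by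
      have h := Real.hasDerivAt_exp 0
      rw [hasDerivAt_iff_tendsto_slope] at h
      have h2 := h.mono_left (nhdsWithin_mono 0 (fun y (hy : y ∈ Set.Ioi (0:ℝ)) => ne_of_gt hy))
      rw [Real.exp_zero] at h2
      refine h2.congr fun x => ?_
      simp [slope_def_field, Real.exp_zero]
    have hB : Tendsto (fun x : ℝ => (Real.exp x - 1 - x) / x ^ 2)
        (nhdsWithin 0 (Set.Ioi 0)) (nhds (1/2)) := by
      have hlo : Tendsto (fun x : ℝ => 1/2 - (2/9) * x) (nhdsWithin 0 (Set.Ioi 0)) (nhds (1/2)) := by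
        have : Tendsto (fun x : ℝ => 1/2 - (2/9) * x) (nhds 0) (nhds (1/2 - (2/9) * 0)) :=
          (tendsto_const_nhds.sub (tendsto_id.const_mul (2/9 : ℝ)))
        simpa using this.mono_left nhdsWithin_le_nhds
      have hhi : Tendsto (fun x : ℝ => 1/2 + (2/9) * x) (nhdsWithin 0 (Set.Ioi 0)) (nhds (1/2)) := by
        have : Tendsto (fun x : ℝ => 1/2 + (2/9) * x) (nhds 0) (nhds (1/2 + (2/9) * 0)) :=
          (tendsto_const_nhds.add (tendsto_id.const_mul (2/9 : ℝ)))
        simpa using this.mono_left nhdsWithin_le_nhds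
      have hmem : Set.Ioc (0:ℝ) 1 ∈ nhdsWithin (0:ℝ) (Set.Ioi 0) :=
        Ioc_mem_nhdsGT zero_lt_one
      refine tendsto_of_tendsto_of_tendsto_of_le_of_le' hlo hhi ?_ ?_
      · filter_upwards [hmem] with x hx
        have hb := Real.exp_bound (by rw [abs_of_pos hx.1]; exact hx.2) (by norm_num : 0 < 3)
        rw [abs_of_pos hx.1] at hb
        have hs : ∑ m ∈ Finset.range 3, x ^ m / (Nat.factorial m) = 1 + x + x ^ 2 / 2 := by
          simp [Finset.sum_range_succ, Nat.factorial]
        rw [hs] at hb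
        norm_num [Nat.factorial] at hb
        have h1 := (abs_le.1 hb).1
        have hx2 : (0:ℝ) < x ^ 2 := pow_pos hx.1 2
        rw [le_div_iff₀ hx2]
        nlinarith [hx.1, hx.2]
      · filter_upwards [hmem] with x hx
        have hb := Real.exp_bound (by rw [abs_of_pos hx.1]; exact hx.2) (by norm_num : 0 < 3)
        rw [abs_of_pos hx.1] at hb
        have hs : ∑ m ∈ Finset.range 3, x ^ m / (Nat.factorial m) = 1 + x + x ^ 2 / 2 := by
          simp [Finset.sum_range_succ, Nat.factorial]
        rw [hs] at hb
        norm_num [Nat.factorial] at hb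
        have h1 := (abs_le.1 hb).2
        have hx2 : (0:ℝ) < x ^ 2 := pow_pos hx.1 2
        rw [div_le_iff₀ hx2]
        nlinarith [hx.1, hx.2]
    have hE : Tendsto (fun x : ℝ => Real.exp x) (nhdsWithin 0 (Set.Ioi 0)) (nhds 1) := by
      have := (Real.continuous_exp.tendsto 0).mono_left
        (nhdsWithin_le_nhds (s := Set.Ioi (0:ℝ)))
      simpa using this
    have hcomb : Tendsto (fun x : ℝ => ((Real.exp x - 1) / x) ^ 2 /
        (Real.exp x * ((Real.exp x - 1 - x) / x ^ 2))) (nhdsWithin 0 (Set.Ioi 0)) (nhds 2) := by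
      have := ((hA.pow 2).div (hE.mul hB) (by norm_num))
      norm_num at this
      exact this
    refine hcomb.congr' ?_
    filter_upwards [self_mem_nhdsWithin] with x (hx : x ∈ Set.Ioi (0:ℝ))
    have hx0 : x ≠ 0 := ne_of_gt hx
    have hEx : Real.exp x ≠ 0 := Real.exp_ne_zero x
    have hD : Real.exp x - 1 - x ≠ 0 := ne_of_gt (aux_pos x hx)
    field_simp
  · -- limit at infinity
    have h0 : Tendsto (fun x : ℝ => Real.exp (-x)) atTop (nhds 0) :=
      Real.tendsto_exp_neg_atTop_nhds_zero
    have h1 : Tendsto (fun x : ℝ => x * Real.exp (-x)) atTop (nhds 0) := by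
      simpa using Real.tendsto_pow_mul_exp_neg_atTop_nhds_zero 1
    have hcomb : Tendsto (fun x : ℝ => (1 - Real.exp (-x)) ^ 2 /
        (1 - Real.exp (-x) - x * Real.exp (-x))) atTop (nhds 1) := by
      have := (((tendsto_const_nhds (x := (1:ℝ))).sub h0).pow 2).div
        (((tendsto_const_nhds (x := (1:ℝ))).sub h0).sub h1) (by norm_num)
      norm_num at this
      exact this
    refine hcomb.congr' ?_
    filter_upwards [eventually_gt_atTop 0] with x hx
    have hEx : Real.exp x ≠ 0 := Real.exp_ne_zero x
    have hD : Real.exp x - 1 - x ≠ 0 := ne_of_gt (aux_pos x hx)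
    rw [Real.exp_neg]
    field_simp
  · -- bounds
    intro x hx
    have hE := Real.exp_pos x
    have h0 := aux_pos x hx
    have hden : 0 < Real.exp x * (Real.exp x - 1 - x) := mul_pos hE h0
    constructor
    · rw [lt_div_iff₀ hden]
      have := aux_lt x hx
      nlinarith
    · rw [div_le_iff₀ hden]
      have := aux_le x hx.le
      nlinarith
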